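/- Let P_0 and Q_0 be probability measures on a set X of ℓ_2-diameter at most D. Then for any r ≥ 0 and any P with W_2(P_0, P) ≤ r, there exists Q with W_2(Q_0, Q) ≤ √(2D²·TV(P_0, Q_0) + r²) such that E_P[f] ≤ E_Q[f] + 2M·TV(P_0, Q_0) for every measurable f with 0 ≤ f ≤ M. Consequently, if sup_{Q : W_2(Q_0,Q) ≤ √(2D²·TV(P_0,Q_0) + r²)} E_Q[f] ≤ ε, then sup_{P : W_2(P_0,P) ≤ r} E_P[f] ≤ ε + 2M·TV(P_0, Q_0). -/

import Mathlib

open MeasureTheory ENNReal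

def IsCoupling {α : Type*} [MeasurableSpace α] (π : Measure (α × α)) (P Q : Measure α) : Prop :=
  π.map Prod.fst = P ∧ π.map Prod.snd = Q

/-- Squared 2-Wasserstein distance: `W₂(P,Q)² = inf_π E_π[dist(u,v)²]`. -/
noncomputable def W2sq {α : Type*} [MeasurableSpace α] [PseudoEMetricSpace α]
    (P Q : Measure α) : ℝ≥0∞ :=
  ⨅ π ∈ {π : Measure (α × α) | IsProbabilityMeasure π ∧ IsCoupling π P Q},
    ∫⁻ p, (edist p.1 p.2) ^ 2 ∂π

noncomputable def tvDist {α : Type*} [MeasurableSpace α] (P Q : Measure α)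
    [IsFiniteMeasure P] [IsFiniteMeasure Q] : ℝ :=
  ((P.toSignedMeasure - Q.toSignedMeasure).totalVariation Set.univ).toReal / 2

lemma tv_hahn {X : Type*} [MeasurableSpace X] (P₀ Q₀ : Measure X)
    [IsProbabilityMeasure P₀] [IsProbabilityMeasure Q₀] :
    ∃ A : Set X, MeasurableSet A ∧
      (∀ B, MeasurableSet B → B ⊆ A → Q₀ B ≤ P₀ B) ∧
      (∀ B, MeasurableSet B → B ⊆ Aᶜ → P₀ B ≤ Q₀ B) ∧
      tvDist P₀ Q₀ = (P₀ A).toReal - (Q₀ A).toReal := by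
  set s : SignedMeasure X := P₀.toSignedMeasure - Q₀.toSignedMeasure with hs
  obtain ⟨A, hA, hpos, hneg, hpp, hnp⟩ := s.toJordanDecomposition_spec
  have hsub : ∀ B : Set X, MeasurableSet B → s B = (P₀ B).toReal - (Q₀ B).toReal := by
    intro B hB
    rw [hs, Measure.toSignedMeasure_sub_apply hB]
    rfl
  refine ⟨A, hA, ?_, ?_, ?_⟩
  · intro B hB hBA
    have h0 : (0 : VectorMeasure X ℝ) B ≤ s B :=
      VectorMeasure.subset_le_of_restrict_le_restrict 0 s hA hpos hBA
    rw [VectorMeasure.zero_apply, hsub B hB] at h0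
    have := sub_nonneg.mp h0
    exact (ENNReal.toReal_le_toReal (measure_ne_top _ _) (measure_ne_top _ _)).mp this
  · intro B hB hBA
    have h0 : s B ≤ (0 : VectorMeasure X ℝ) B :=
      VectorMeasure.subset_le_of_restrict_le_restrict s 0 hA.compl hneg hBA
    rw [VectorMeasure.zero_apply, hsub B hB] at h0
    have := sub_nonpos.mp h0
    exact (ENNReal.toReal_le_toReal (measure_ne_top _ _) (measure_ne_top _ _)).mp this
  · have hsuniv : s Set.univ = 0 := by
      rw [hsub _ MeasurableSet.univ]
      simp
    have hsplit : s A + s Aᶜ = 0 := by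
      rw [← VectorMeasure.of_union disjoint_compl_right hA hA.compl, Set.union_compl_self, hsuniv]
    have hposu : (s.toJordanDecomposition.posPart Set.univ).toReal = s A := by
      rw [hpp, SignedMeasure.toMeasureOfZeroLE_apply _ hpos hA MeasurableSet.univ]
      simp
    have hnegu : (s.toJordanDecomposition.negPart Set.univ).toReal = -s Aᶜ := by
      rw [hnp, SignedMeasure.toMeasureOfLEZero_apply _ hneg hA.compl MeasurableSet.univ]
      simp
    have htV : (s.totalVariation Set.univ).toReal = s A + -s Aᶜ := by
      rw [SignedMeasure.totalVariation, Measure.add_apply, ENNReal.toReal_add, hposu, hnegu]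
      · rw [hpp]; exact (SignedMeasure.toMeasureOfZeroLE_apply _ hpos hA MeasurableSet.univ) ▸
          ENNReal.coe_ne_top
      · rw [hnp]; exact (SignedMeasure.toMeasureOfLEZero_apply _ hneg hA.compl
          MeasurableSet.univ) ▸ ENNReal.coe_ne_top
    have : tvDist P₀ Q₀ = s A := by
      rw [tvDist, ← hs, htV]
      have : -s Aᶜ = s A := by linarith
      rw [this]; ring
    rw [this, hsub A hA]

lemma tv_eq_zero {X : Type*} [MeasurableSpace X] (P₀ Q₀ : Measure X)
    [IsProbabilityMeasure P₀] [IsProbabilityMeasure Q₀] (h : tvDist P₀ Q₀ = 0) : P₀ = Q₀ := by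
  set s : SignedMeasure X := P₀.toSignedMeasure - Q₀.toSignedMeasure with hs
  have : IsFiniteMeasure s.totalVariation := by
    rw [SignedMeasure.totalVariation]; infer_instance
  have hfin : s.totalVariation Set.univ ≠ ⊤ := measure_ne_top _ _
  have h0 : s.totalVariation Set.univ = 0 := by
    rw [tvDist, _root_.div_eq_zero_iff] at h
    rcases h with h | h
    · exact (ENNReal.toReal_eq_zero_iff _).mp h |>.resolve_right hfin
    · norm_num at h
  ext B hB
  have hB0 : s.totalVariation B = 0 :=
    le_antisymm (h0 ▸ measure_mono (Set.subset_univ B)) zero_le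
  have := SignedMeasure.null_of_totalVariation_zero s hB0
  rw [hs, Measure.toSignedMeasure_sub_apply hB, sub_eq_zero] at this
  exact (ENNReal.toReal_eq_toReal_iff' (measure_ne_top _ _) (measure_ne_top _ _)).mp this

lemma tv_nonneg {X : Type*} [MeasurableSpace X] (P₀ Q₀ : Measure X)
    [IsProbabilityMeasure P₀] [IsProbabilityMeasure Q₀] : 0 ≤ tvDist P₀ Q₀ :=
  div_nonneg ENNReal.toReal_nonneg (by norm_num)

lemma key {X : Type*} [MeasurableSpace X] [PseudoEMetricSpace X] (P₀ Q₀ P : Measure X)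
    [IsProbabilityMeasure P₀] [IsProbabilityMeasure Q₀] [IsProbabilityMeasure P]
    (π : Measure (X × X)) (hπprob : IsProbabilityMeasure π) (hπ : IsCoupling π P₀ P) :
    ∃ Q : Measure X, IsProbabilityMeasure Q ∧
      W2sq Q₀ Q ≤ ∫⁻ p, (edist p.1 p.2) ^ 2 ∂π ∧
      ∀ (M : ℝ) (f : X → ℝ), 0 ≤ M → Measurable f → (∀ x, 0 ≤ f x ∧ f x ≤ M) →
        ∫ x, f x ∂P ≤ ∫ x, f x ∂Q + 2 * M * tvDist P₀ Q₀ := by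
  obtain ⟨A, hA, hQP, hPQ, htv⟩ := tv_hahn P₀ Q₀
  -- the common part ν
  set ν : Measure X := Q₀.restrict A + P₀.restrict Aᶜ with hν
  have hν_apply : ∀ B : Set X, MeasurableSet B → ν B = Q₀ (B ∩ A) + P₀ (B ∩ Aᶜ) := by
    intro B hB
    rw [hν, Measure.add_apply, Measure.restrict_apply hB, Measure.restrict_apply hB]
  have hν_le_P : ν ≤ P₀ := by
    refine Measure.le_iff.mpr fun B hB => ?_
    rw [hν_apply B hB]
    calc Q₀ (B ∩ A) + P₀ (B ∩ Aᶜ) ≤ P₀ (B ∩ A) + P₀ (B ∩ Aᶜ) := by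
          gcongr ?_ + _
          exact hQP _ (hB.inter hA) Set.inter_subset_right
      _ = P₀ B := by
          rw [← Set.diff_eq, measure_inter_add_diff B hA]
  have hν_le_Q : ν ≤ Q₀ := by
    refine Measure.le_iff.mpr fun B hB => ?_
    rw [hν_apply B hB]
    calc Q₀ (B ∩ A) + P₀ (B ∩ Aᶜ) ≤ Q₀ (B ∩ A) + Q₀ (B ∩ Aᶜ) := by
          gcongr _ + ?_
          exact hPQ _ (hB.inter hA.compl) Set.inter_subset_right
      _ = Q₀ B := by
          rw [← Set.diff_eq, measure_inter_add_diff B hA]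
  have hνfin : IsFiniteMeasure ν := isFiniteMeasure_of_le Q₀ hν_le_Q
  -- mass identity
  have hQA_le : Q₀ A ≤ P₀ A := hQP A hA Set.Subset.rfl
  have hoftv : ENNReal.ofReal (tvDist P₀ Q₀) = P₀ A - Q₀ A := by
    rw [htv, ENNReal.ofReal_sub _ ENNReal.toReal_nonneg, ENNReal.ofReal_toReal (measure_ne_top _ _),
      ENNReal.ofReal_toReal (measure_ne_top _ _)]
  have hmass : ν Set.univ + ENNReal.ofReal (tvDist P₀ Q₀) = 1 := by
    rw [hν_apply _ MeasurableSet.univ, Set.univ_inter, Set.univ_inter, hoftv]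
    calc Q₀ A + P₀ Aᶜ + (P₀ A - Q₀ A) = P₀ Aᶜ + (Q₀ A + (P₀ A - Q₀ A)) := by ring
      _ = P₀ Aᶜ + P₀ A := by rw [add_tsub_cancel_of_le hQA_le]
      _ = 1 := by rw [add_comm, measure_add_measure_compl hA, measure_univ]
  have hνuniv_le : ν Set.univ ≤ 1 := le_trans (hν_le_Q _) (le_of_eq measure_univ)
  -- density of ν wrt P₀
  set g : X → ℝ≥0∞ := ν.rnDeriv P₀ with hg
  have hgm : Measurable g := Measure.measurable_rnDeriv _ _
  have hg1 : g ≤ᵐ[P₀] 1 := Measure.rnDeriv_le_one_of_le hν_le_P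
  have hνwd : P₀.withDensity g = ν :=
    Measure.withDensity_rnDeriv_eq _ _ (Measure.absolutelyContinuous_of_le hν_le_P)
  -- restricted coupling
  set π' : Measure (X × X) := π.withDensity (fun p => g p.1) with hπ'
  have hgm1 : Measurable (fun p : X × X => g p.1) := hgm.comp measurable_fst
  have hae : (fun p : X × X => g p.1) ≤ᵐ[π] 1 := by
    have hms : MeasurableSet {x : X | ¬ g x ≤ 1} := (measurableSet_le hgm measurable_const).compl
    have h0 : P₀ {x : X | ¬ g x ≤ 1} = 0 := by
      have h0 := hg1
      rw [Filter.EventuallyLE, ae_iff] at h0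
      simpa using h0
    have : π {p : X × X | ¬ g p.1 ≤ 1} = 0 := by
      have : {p : X × X | ¬ g p.1 ≤ 1} = Prod.fst ⁻¹' {x : X | ¬ g x ≤ 1} := rfl
      rw [this, ← Measure.map_apply measurable_fst hms, hπ.1, h0]
    exact this
  have hπ'_le : π' ≤ π := by
    refine Measure.le_iff.mpr fun B hB => ?_
    rw [hπ', withDensity_apply _ hB]
    calc ∫⁻ p in B, g p.1 ∂π ≤ ∫⁻ _ in B, 1 ∂π :=
          lintegral_mono_ae (ae_restrict_of_ae hae)
      _ = π B := by simp
  have hfst : π'.map Prod.fst = ν := by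
    ext B hB
    rw [Measure.map_apply measurable_fst hB, hπ', withDensity_apply _ (measurable_fst hB),
      ← hνwd, withDensity_apply _ hB, ← hπ.1, setLIntegral_map hB hgm measurable_fst]
  set μ' : Measure X := π'.map Prod.snd with hμ'
  have hμ'_le : μ' ≤ P := by
    rw [hμ', ← hπ.2]
    exact Measure.map_mono hπ'_le measurable_snd
  have hμ'fin : IsFiniteMeasure μ' := isFiniteMeasure_of_le P hμ'_le
  have hπ'univ : π' Set.univ = ν Set.univ := by
    have : (π'.map Prod.fst) Set.univ = π' Set.univ := by
      rw [Measure.map_apply measurable_fst MeasurableSet.univ, Set.preimage_univ]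
    rw [← this, hfst]
  have hμ'univ : μ' Set.univ = ν Set.univ := by
    rw [hμ', Measure.map_apply measurable_snd MeasurableSet.univ, Set.preimage_univ, hπ'univ]
  -- the leftover masses
  set ρ : Measure X := Q₀ - ν with hρ
  have hρuniv : ρ Set.univ = ENNReal.ofReal (tvDist P₀ Q₀) := by
    rw [hρ, Measure.sub_apply MeasurableSet.univ hν_le_Q, measure_univ]
    exact ENNReal.sub_eq_of_eq_add (measure_ne_top _ _) (by rw [add_comm, hmass])
  have hρν : ν + ρ = Q₀ := by
    rw [hρ, add_comm, Measure.sub_add_cancel_of_le hν_le_Q]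
  set τ : Measure X := P - μ' with hτ
  have hτuniv : τ Set.univ = ENNReal.ofReal (tvDist P₀ Q₀) := by
    rw [hτ, Measure.sub_apply MeasurableSet.univ hμ'_le, measure_univ, hμ'univ]
    exact ENNReal.sub_eq_of_eq_add (measure_ne_top _ _) (by rw [add_comm, hmass])
  have hτμ' : μ' + τ = P := by
    rw [hτ, add_comm, Measure.sub_add_cancel_of_le hμ'_le]
  -- diagonal embedding of ρ
  have hdiag : Measurable (fun x : X => (x, x)) := measurable_id.prodMk measurable_id
  set σ : Measure (X × X) := ρ.map (fun x => (x, x)) with hσ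
  set Q : Measure X := μ' + ρ with hQdef
  set γ : Measure (X × X) := π' + σ with hγ
  have hσfst : σ.map Prod.fst = ρ := by
    rw [hσ, Measure.map_map measurable_fst hdiag]
    exact Measure.map_id
  have hσsnd : σ.map Prod.snd = ρ := by
    rw [hσ, Measure.map_map measurable_snd hdiag]
    exact Measure.map_id
  have hγcoup : IsCoupling γ Q₀ Q := by
    constructor
    · rw [hγ, Measure.map_add _ _ measurable_fst, hfst, hσfst, hρν]
    · rw [hγ, Measure.map_add _ _ measurable_snd, ← hμ', hσsnd, hQdef]
  have hQuniv : Q Set.univ = 1 := by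
    rw [hQdef, Measure.add_apply, hμ'univ, hρuniv, hmass]
  have hQprob : IsProbabilityMeasure Q := ⟨hQuniv⟩
  have hσuniv : σ Set.univ = ρ Set.univ := by
    rw [hσ, Measure.map_apply hdiag MeasurableSet.univ, Set.preimage_univ]
  have hγprob : IsProbabilityMeasure γ := by
    constructor
    rw [hγ, Measure.add_apply, hπ'univ, hσuniv, hρuniv, hmass]
  refine ⟨Q, hQprob, ?_, ?_⟩
  · -- W2sq bound
    have hW : W2sq Q₀ Q ≤ ∫⁻ p, (edist p.1 p.2) ^ 2 ∂γ := by
      exact iInf₂_le γ ⟨hγprob, hγcoup⟩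
    refine le_trans hW ?_
    rw [hγ, lintegral_add_measure]
    have h1 : ∫⁻ p, (edist p.1 p.2) ^ 2 ∂π' ≤ ∫⁻ p, (edist p.1 p.2) ^ 2 ∂π :=
      lintegral_mono' hπ'_le le_rfl
    have h2 : ∫⁻ p, (edist p.1 p.2) ^ 2 ∂σ = 0 := by
      have := lintegral_map_le (fun p : X × X => (edist p.1 p.2) ^ 2) (fun x : X => (x, x)) (μ := ρ)
      rw [hσ]
      refine le_antisymm (le_trans this ?_) zero_le
      simp [edist_self]
    rw [h2, add_zero]
    exact h1
  · -- integral bound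
    intro M f hM hfm hfb
    have hint : ∀ (μ : Measure X), IsFiniteMeasure μ → Integrable f μ := by
      intro μ hμ
      refine Integrable.mono' (integrable_const M) hfm.aestronglyMeasurable ?_
      filter_upwards with x
      rw [Real.norm_eq_abs, abs_of_nonneg (hfb x).1]
      exact (hfb x).2
    have hτfin : IsFiniteMeasure τ := isFiniteMeasure_of_le P (hτ ▸ Measure.sub_le)
    have hρfin : IsFiniteMeasure ρ := isFiniteMeasure_of_le Q₀ (hρ ▸ Measure.sub_le)
    have hP : ∫ x, f x ∂P = ∫ x, f x ∂μ' + ∫ x, f x ∂τ := by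
      rw [← hτμ', integral_add_measure (hint _ hμ'fin) (hint _ hτfin)]
    have hQ : ∫ x, f x ∂Q = ∫ x, f x ∂μ' + ∫ x, f x ∂ρ := by
      rw [hQdef, integral_add_measure (hint _ hμ'fin) (hint _ hρfin)]
    have hτb : ∫ x, f x ∂τ ≤ M * tvDist P₀ Q₀ := by
      calc ∫ x, f x ∂τ ≤ ∫ _, M ∂τ := integral_mono (hint _ hτfin) (integrable_const M)
            fun x => (hfb x).2
        _ = (τ Set.univ).toReal * M := by rw [integral_const]; simp [smul_eq_mul, Measure.real]
        _ = M * tvDist P₀ Q₀ := by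
            rw [hτuniv, ENNReal.toReal_ofReal (tv_nonneg P₀ Q₀), mul_comm]
    have hρb : 0 ≤ ∫ x, f x ∂ρ := integral_nonneg fun x => (hfb x).1
    have htvnn : 0 ≤ tvDist P₀ Q₀ := tv_nonneg P₀ Q₀
    nlinarith [hP, hQ, hτb, hρb]

theorem stmt11 {X : Type*} [MetricSpace X] [MeasurableSpace X] [BorelSpace X]
    (D : ℝ) (hD : ∀ u v : X, dist u v ≤ D)
    (P₀ Q₀ : Measure X) [IsProbabilityMeasure P₀] [IsProbabilityMeasure Q₀]
    (r : ℝ) (hr : 0 ≤ r) :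
    (∀ P : Measure X, IsProbabilityMeasure P →
      W2sq P₀ P ≤ ENNReal.ofReal (r ^ 2) →
      ∃ Q : Measure X, IsProbabilityMeasure Q ∧
        W2sq Q₀ Q ≤ ENNReal.ofReal (2 * D ^ 2 * tvDist P₀ Q₀ + r ^ 2) ∧
        ∀ (M : ℝ) (f : X → ℝ), 0 ≤ M → Measurable f → (∀ x, 0 ≤ f x ∧ f x ≤ M) →
          ∫ x, f x ∂P ≤ ∫ x, f x ∂Q + 2 * M * tvDist P₀ Q₀) ∧
    (∀ (M : ℝ) (f : X → ℝ) (ε : ℝ), 0 ≤ M → Measurable f → (∀ x, 0 ≤ f x ∧ f x ≤ M) →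
      (∀ Q : Measure X, IsProbabilityMeasure Q →
        W2sq Q₀ Q ≤ ENNReal.ofReal (2 * D ^ 2 * tvDist P₀ Q₀ + r ^ 2) →
        ∫ x, f x ∂Q ≤ ε) →
      ∀ P : Measure X, IsProbabilityMeasure P →
        W2sq P₀ P ≤ ENNReal.ofReal (r ^ 2) →
        ∫ x, f x ∂P ≤ ε + 2 * M * tvDist P₀ Q₀) := by
  have htvnn : 0 ≤ tvDist P₀ Q₀ := tv_nonneg P₀ Q₀
  have h1 : ∀ P : Measure X, IsProbabilityMeasure P →
      W2sq P₀ P ≤ ENNReal.ofReal (r ^ 2) →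
      ∃ Q : Measure X, IsProbabilityMeasure Q ∧
        W2sq Q₀ Q ≤ ENNReal.ofReal (2 * D ^ 2 * tvDist P₀ Q₀ + r ^ 2) ∧
        ∀ (M : ℝ) (f : X → ℝ), 0 ≤ M → Measurable f → (∀ x, 0 ≤ f x ∧ f x ≤ M) →
          ∫ x, f x ∂P ≤ ∫ x, f x ∂Q + 2 * M * tvDist P₀ Q₀ := by
    intro P hP hW
    by_cases hPQ : P₀ = Q₀
    · subst hPQ
      refine ⟨P, hP, ?_, ?_⟩
      · refine le_trans hW (ENNReal.ofReal_le_ofReal ?_)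
        nlinarith [sq_nonneg D, tv_nonneg P₀ P₀]
      · intro M f hM hfm hfb
        nlinarith [tv_nonneg P₀ P₀]
    · have hDpos : 0 < D := by
        by_contra hD0
        push_neg at hD0
        refine hPQ ?_
        have hsub : ∀ u v : X, u = v := fun u v =>
          eq_of_dist_eq_zero (le_antisymm (le_trans (hD u v) hD0) dist_nonneg)
        ext B hB
        rcases Set.eq_empty_or_nonempty B with h | h
        · simp [h]
        · obtain ⟨x, hx⟩ := h
          have : B = Set.univ := Set.eq_univ_of_forall fun y => (hsub y x) ▸ hx
          simp [this]
      have htvpos : 0 < tvDist P₀ Q₀ :=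
        lt_of_le_of_ne htvnn fun h => hPQ (tv_eq_zero P₀ Q₀ h.symm)
      have hlt : W2sq P₀ P <
          ENNReal.ofReal (r ^ 2) + ENNReal.ofReal (2 * D ^ 2 * tvDist P₀ Q₀) := by
        refine lt_of_le_of_lt hW ?_
        refine ENNReal.lt_add_right ENNReal.ofReal_ne_top ?_
        rw [ne_eq, ENNReal.ofReal_eq_zero, not_le]
        nlinarith [pow_pos hDpos 2, mul_pos (pow_pos hDpos 2) htvpos]
      rw [W2sq] at hlt
      obtain ⟨π, hπlt⟩ := iInf_lt_iff.mp hlt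
      obtain ⟨hπmem, hπlt⟩ := iInf_lt_iff.mp hπlt
      obtain ⟨hπprob, hπcoup⟩ := hπmem
      haveI := hP
      obtain ⟨Q, hQprob, hQW, hQf⟩ := key P₀ Q₀ P π hπprob hπcoup
      refine ⟨Q, hQprob, ?_, hQf⟩
      refine le_trans hQW (le_trans hπlt.le ?_)
      rw [← ENNReal.ofReal_add (by positivity) (by positivity)]
      exact ENNReal.ofReal_le_ofReal (by linarith)
  refine ⟨h1, ?_⟩
  intro M f ε hM hfm hfb hsup P hP hW
  obtain ⟨Q, hQp, hQW, hQf⟩ := h1 P hP hW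
  have := hsup Q hQp hQW
  linarith [hQf M f hM hfm hfb]
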